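/- With Q_c the algebra of c-quasi-invariants of a finite Coxeter group W (c a W-invariant function R → ℤ₊), the ring Q_c is a finitely generated ℂ-algebra and its integral closure in its field of fractions equals ℂ[𝔥]. -/
import Mathlib

open Polynomial

/-- The "characteristic polynomial" `∏_{w ∈ W} (X - w(f))` of an element `f` under a
group action on `ℂ[x₁,…,xₙ]`. -/
private noncomputable def QIcharPoly {n : ℕ} {W : Type*} [Group W] [Fintype W]
    (ρ : W →* (MvPolynomial (Fin n) ℂ ≃ₐ[ℂ] MvPolynomial (Fin n) ℂ))
    (f : MvPolynomial (Fin n) ℂ) : Polynomial (MvPolynomial (Fin n) ℂ) :=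
  ∏ w : W, (Polynomial.X - Polynomial.C (ρ w f))

private theorem QIcharPoly_monic {n : ℕ} {W : Type*} [Group W] [Fintype W]
    (ρ : W →* (MvPolynomial (Fin n) ℂ ≃ₐ[ℂ] MvPolynomial (Fin n) ℂ))
    (f : MvPolynomial (Fin n) ℂ) : (QIcharPoly ρ f).Monic :=
  monic_prod_of_monic _ _ fun _ _ => monic_X_sub_C _

private theorem QIcharPoly_eval {n : ℕ} {W : Type*} [Group W] [Fintype W]
    (ρ : W →* (MvPolynomial (Fin n) ℂ ≃ₐ[ℂ] MvPolynomial (Fin n) ℂ))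
    (f : MvPolynomial (Fin n) ℂ) : (QIcharPoly ρ f).eval f = 0 := by
  rw [QIcharPoly, eval_prod]
  refine Finset.prod_eq_zero (Finset.mem_univ (1 : W)) ?_
  simp

private theorem QIcharPoly_coeff_invariant {n : ℕ} {W : Type*} [Group W] [Fintype W]
    (ρ : W →* (MvPolynomial (Fin n) ℂ ≃ₐ[ℂ] MvPolynomial (Fin n) ℂ))
    (f : MvPolynomial (Fin n) ℂ) (w₀ : W) (j : ℕ) :
    ρ w₀ ((QIcharPoly ρ f).coeff j) = (QIcharPoly ρ f).coeff j := by
  have hmap : (QIcharPoly ρ f).map ((ρ w₀).toAlgHom.toRingHom) = QIcharPoly ρ f := by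
    rw [QIcharPoly, Polynomial.map_prod]
    have key : ∀ w : W, ρ w₀ (ρ w f) = ρ (w₀ * w) f := by
      intro w; rw [map_mul]; rfl
    calc (∏ w : W, ((Polynomial.X - Polynomial.C (ρ w f)).map (ρ w₀).toAlgHom.toRingHom))
        = ∏ w : W, (Polynomial.X - Polynomial.C (ρ (w₀ * w) f)) := by
          refine Finset.prod_congr rfl fun w _ => ?_
          rw [Polynomial.map_sub, Polynomial.map_X, Polynomial.map_C]
          congr 1
          exact congrArg Polynomial.C (key w)
      _ = ∏ w : W, (Polynomial.X - Polynomial.C (ρ w f)) :=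
          Fintype.prod_equiv (Equiv.mulLeft w₀)
            (fun w => Polynomial.X - Polynomial.C (ρ (w₀ * w) f))
            (fun w => Polynomial.X - Polynomial.C (ρ w f)) (fun w => rfl)
  calc ρ w₀ ((QIcharPoly ρ f).coeff j)
      = ((QIcharPoly ρ f).map ((ρ w₀).toAlgHom.toRingHom)).coeff j :=
        (Polynomial.coeff_map ((ρ w₀).toAlgHom.toRingHom) j).symm
    _ = (QIcharPoly ρ f).coeff j := by rw [hmap]

/-- Let `Q_c ⊆ ℂ[𝔥] = ℂ[x₁,…,x_n]` be the algebra of `c`-quasi-invariants of a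
finite Coxeter group `W` (with `c : I → ℕ` a `W`-invariant multiplicity function
on the root system).  Then `Q_c` is a finitely generated `ℂ`-algebra, and its
integral closure in its field of fractions (= the field of fractions of `ℂ[𝔥]`)
equals `ℂ[𝔥]` : every element of the fraction field integral over `Q_c` lies in
`ℂ[𝔥]`, and conversely. -/
theorem quasi_invariants_finitely_generated_and_normalization
    (n : ℕ) {W : Type*} [Group W] [Fintype W]
    (ρ : W →* (MvPolynomial (Fin n) ℂ ≃ₐ[ℂ] MvPolynomial (Fin n) ℂ))
    {I : Type*} [Fintype I] [MulAction W I]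
    (α : I → MvPolynomial (Fin n) ℂ) (s : I → W) (c : I → ℕ)
    (hα1 : ∀ i, (α i).IsHomogeneous 1) (hα0 : ∀ i, α i ≠ 0)
    (hrefl : ∀ i, ρ (s i) (α i) = - α i)
    (hs2 : ∀ i, s i * s i = 1)
    (hroots : ∀ (w : W) (i : I), ρ w (α i) = α (w • i))
    (hconj : ∀ (w : W) (i : I), s (w • i) = w * s i * w⁻¹)
    (hcinv : ∀ (w : W) (i : I), c (w • i) = c i)
    (Q : Set (MvPolynomial (Fin n) ℂ))
    (hQ : Q = {f | ∀ i : I,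
      ρ (s i) f - f ∈ Ideal.span {α i ^ (2 * c i + 1)}}) :
    -- `Q_c` is a finitely generated `ℂ`-algebra:
    (∃ T : Finset (MvPolynomial (Fin n) ℂ),
      Q = (Algebra.adjoin ℂ (T : Set (MvPolynomial (Fin n) ℂ)) :
        Subalgebra ℂ (MvPolynomial (Fin n) ℂ))) ∧
    -- the integral closure of `Q_c` in the fraction field equals `ℂ[𝔥]`:
    (∀ z : FractionRing (MvPolynomial (Fin n) ℂ),
      (∃ p : Polynomial (FractionRing (MvPolynomial (Fin n) ℂ)),
          p.Monic ∧
          (∀ j, p.coeff j ∈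
            (algebraMap (MvPolynomial (Fin n) ℂ)
              (FractionRing (MvPolynomial (Fin n) ℂ))) '' Q) ∧
          Polynomial.eval z p = 0) ↔
        z ∈ Set.range
          (algebraMap (MvPolynomial (Fin n) ℂ)
            (FractionRing (MvPolynomial (Fin n) ℂ)))) := by
  subst hQ
  -- `W`-invariant polynomials are quasi-invariant
  have hQmem : ∀ f : MvPolynomial (Fin n) ℂ, (∀ w : W, ρ w f = f) →
      f ∈ {f | ∀ i : I, ρ (s i) f - f ∈ Ideal.span {α i ^ (2 * c i + 1)}} := by
    intro f hf i
    rw [hf (s i), sub_self]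
    exact Ideal.zero_mem _
  -- `Q` as a subalgebra of `ℂ[x₁,…,xₙ]`
  let Q' : Subalgebra ℂ (MvPolynomial (Fin n) ℂ) :=
    { carrier := {f | ∀ i : I, ρ (s i) f - f ∈ Ideal.span {α i ^ (2 * c i + 1)}}
      zero_mem' := by intro i; rw [map_zero, sub_self]; exact Ideal.zero_mem _
      one_mem' := by intro i; rw [map_one, sub_self]; exact Ideal.zero_mem _
      add_mem' := by
        intro a b ha hb i
        have h : ρ (s i) (a + b) - (a + b)
            = (ρ (s i) a - a) + (ρ (s i) b - b) := by rw [map_add]; ring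
        rw [h]
        exact Ideal.add_mem _ (ha i) (hb i)
      mul_mem' := by
        intro a b ha hb i
        have h : ρ (s i) (a * b) - a * b
            = ρ (s i) a * (ρ (s i) b - b) + (ρ (s i) a - a) * b := by rw [map_mul]; ring
        rw [h]
        exact Ideal.add_mem _ (Ideal.mul_mem_left _ _ (hb i))
          (Ideal.mul_mem_right _ _ (ha i))
      algebraMap_mem' := by
        intro r i
        rw [AlgEquiv.commutes, sub_self]
        exact Ideal.zero_mem _ }
  -- every polynomial is integral over `Q'`
  have hint : ∀ f : MvPolynomial (Fin n) ℂ, IsIntegral Q' f := by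
    intro f
    have hco : ↑(QIcharPoly ρ f).coeffs ⊆ (Q'.toSubring : Set (MvPolynomial (Fin n) ℂ)) := by
      intro x hx
      obtain ⟨j, _, rfl⟩ := Polynomial.mem_coeffs_iff.mp hx
      exact hQmem _ (fun w => QIcharPoly_coeff_invariant ρ f w j)
    refine ⟨(QIcharPoly ρ f).toSubring Q'.toSubring hco,
      (Polynomial.monic_toSubring _ _ _).mpr (QIcharPoly_monic ρ f), ?_⟩
    have halg : (algebraMap Q' (MvPolynomial (Fin n) ℂ)) = Q'.toSubring.subtype := rfl
    rw [Polynomial.eval₂_eq_eval_map, halg, Polynomial.map_toSubring, QIcharPoly_eval]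
  haveI : Algebra.IsIntegral Q' (MvPolynomial (Fin n) ℂ) := ⟨hint⟩
  haveI hft : Algebra.FiniteType Q' (MvPolynomial (Fin n) ℂ) :=
    Algebra.FiniteType.of_restrictScalars_finiteType ℂ Q' (MvPolynomial (Fin n) ℂ)
  haveI hfin : Module.Finite Q' (MvPolynomial (Fin n) ℂ) := Algebra.IsIntegral.finite
  constructor
  · -- finite generation, via the Artin--Tate lemma
    have hAC : (⊤ : Subalgebra ℂ (MvPolynomial (Fin n) ℂ)).FG :=
      (inferInstance : Algebra.FiniteType ℂ (MvPolynomial (Fin n) ℂ)).out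
    have hBC : (⊤ : Submodule Q' (MvPolynomial (Fin n) ℂ)).FG := Module.finite_def.mp hfin
    have hBCi : Function.Injective (algebraMap Q' (MvPolynomial (Fin n) ℂ)) :=
      Subtype.val_injective
    have hfg : Q'.FG := (Subalgebra.fg_top Q').mp
      (fg_of_fg_of_fg ℂ Q' (MvPolynomial (Fin n) ℂ) hAC hBC hBCi)
    obtain ⟨T, hT⟩ := hfg
    refine ⟨T, ?_⟩
    rw [hT]
    rfl
  · intro z
    constructor
    · -- an element integral over `Q` lies in `ℂ[x₁,…,xₙ]` (which is integrally closed)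
      rintro ⟨p, hpm, hpc, hpe⟩
      have hlift : p ∈ Polynomial.lifts
          (algebraMap (MvPolynomial (Fin n) ℂ) (FractionRing (MvPolynomial (Fin n) ℂ))) := by
        rw [Polynomial.lifts_iff_coeff_lifts]
        intro j
        obtain ⟨g, _, hgz⟩ := hpc j
        exact ⟨g, hgz⟩
      obtain ⟨q, hq, -, hqm⟩ := Polynomial.lifts_and_degree_eq_and_monic hlift hpm
      have hz : IsIntegral (MvPolynomial (Fin n) ℂ) z := by
        refine ⟨q, hqm, ?_⟩
        rw [Polynomial.eval₂_eq_eval_map, hq]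
        exact hpe
      obtain ⟨y, hy⟩ := IsIntegrallyClosed.isIntegral_iff.mp hz
      exact ⟨y, hy⟩
    · -- conversely, every polynomial is integral over `Q`
      rintro ⟨f, rfl⟩
      refine ⟨(QIcharPoly ρ f).map
        (algebraMap (MvPolynomial (Fin n) ℂ) (FractionRing (MvPolynomial (Fin n) ℂ))),
        (QIcharPoly_monic ρ f).map _, ?_, ?_⟩
      · intro j
        rw [Polynomial.coeff_map]
        exact ⟨(QIcharPoly ρ f).coeff j,
          hQmem _ (fun w => QIcharPoly_coeff_invariant ρ f w j), rfl⟩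
      · rw [Polynomial.eval_map, Polynomial.eval₂_at_apply, QIcharPoly_eval, map_zero]
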